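/- If G is an edge-critical uniquely 3-colorable graph and v is a vertex of G with degree 2, then G - v is uniquely 3-colorable and edge-critical, provided |V(G)| ≥ 4. -/

import Mathlib

open SimpleGraph

/-- `G` is uniquely `k`-colorable: its chromatic number is `k` and all proper
`k`-colorings induce the same partition of the vertex set into color classes. -/
def UniquelyKColorable {V : Type} (G : SimpleGraph V) (k : ℕ) : Prop :=
  G.chromaticNumber = k ∧
    ∀ c₁ c₂ : G.Coloring (Fin k), ∀ u v : V, c₁ u = c₁ v ↔ c₂ u = c₂ v

/-- `G` is an edge-critical uniquely `k`-colorable graph. -/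
def EdgeCritical {V : Type} (G : SimpleGraph V) (k : ℕ) : Prop :=
  UniquelyKColorable G k ∧
    ∀ e ∈ G.edgeSet, ¬ UniquelyKColorable (G.deleteEdges {e}) k

/-- A combinatorial plane embedding of `G`: a family of faces, each with a closed
boundary walk, such that every edge lies on face boundaries exactly twice in total,
and Euler's formula holds. -/
structure PlaneEmbedding {V : Type} [DecidableEq V] (G : SimpleGraph V) where
  Faces : Type
  [facesFintype : Fintype Faces]
  boundary : Faces → Σ v : V, G.Walk v v
  edge_count : ∀ e ∈ G.edgeSet, (∑ f : Faces, ((boundary f).2.edges.count e)) = 2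
  euler : Nat.card V + Nat.card Faces = G.edgeSet.ncard + 1 + Nat.card G.ConnectedComponent

attribute [instance] PlaneEmbedding.facesFintype

/-- The degree of a face: the length of its boundary walk (cut edges counted twice). -/
def PlaneEmbedding.fdeg {V : Type} [DecidableEq V] {G : SimpleGraph V}
    (emb : PlaneEmbedding G) (f : emb.Faces) : ℕ :=
  (emb.boundary f).2.length

def Planar {V : Type} [DecidableEq V] (G : SimpleGraph V) : Prop :=
  Nonempty (PlaneEmbedding G)

/-- Outerplanar: a plane embedding with one face incident with all vertices. -/
def Outerplanar {V : Type} [DecidableEq V] (G : SimpleGraph V) : Prop :=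
  ∃ emb : PlaneEmbedding G, ∃ f : emb.Faces, ∀ v : V, v ∈ (emb.boundary f).2.support

def MaximalOuterplanar {V : Type} [DecidableEq V] (G : SimpleGraph V) : Prop :=
  Outerplanar G ∧ ∀ u v : V, u ≠ v → ¬ G.Adj u v →
    ¬ Outerplanar (G ⊔ SimpleGraph.fromEdgeSet {s(u, v)})

/-- `s` is the edge set of a cycle of `G`. -/
def IsCycleSet {V : Type} (G : SimpleGraph V) (s : Set (Sym2 V)) : Prop :=
  ∃ (v : V) (w : G.Walk v v), w.IsCycle ∧ {e | e ∈ w.edges} = s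

/-- Two cycles (given by their edge sets) are dependent: joined by a chain of cycles
in which consecutive cycles share an edge and all intermediate cycles have 4 vertices. -/
def Dependent {V : Type} (G : SimpleGraph V) (s s' : Set (Sym2 V)) : Prop :=
  ∃ (t : ℕ) (C : Fin (t + 2) → Set (Sym2 V)),
    (∀ i, IsCycleSet G (C i)) ∧ C 0 = s ∧ C (Fin.last (t + 1)) = s' ∧
    (∀ i : Fin (t + 1), (C i.castSucc ∩ C i.succ).Nonempty) ∧
    ∀ i : Fin (t + 2), i ≠ 0 → i ≠ Fin.last (t + 1) → (C i).ncard = 4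

/-- `G` has no separating 3-cycle: deleting the vertices of any triangle leaves a
connected graph. -/
def NoSeparating3Cycle {V : Type} (G : SimpleGraph V) : Prop :=
  ∀ s : Finset V, G.IsNClique 3 s → (G.induce {v : V | v ∉ s}).Connected

/-- `H` is a triangle-subgraph of `G`: the union of a sequence of triangles each of
which (after the first) shares an edge with an earlier one. -/
def IsTriangleSubgraph {V : Type} (G : SimpleGraph V) (H : G.Subgraph) : Prop :=
  ∃ (t : ℕ) (T : Fin (t + 1) → Finset V),
    (∀ i, G.IsNClique 3 (T i)) ∧
    (∀ j : Fin (t + 1), j ≠ 0 →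
      ∃ i : Fin (t + 1), i < j ∧ ((T i : Set V) ∩ (T j : Set V)).ncard = 2) ∧
    H = ⨆ i, (⊤ : G.Subgraph).induce (T i : Set V)

def MaximalTriangleSubgraph {V : Type} (G : SimpleGraph V) (H : G.Subgraph) : Prop :=
  IsTriangleSubgraph G H ∧ ∀ H' : G.Subgraph, IsTriangleSubgraph G H' → ¬ H < H'

/-- The set of edges of `G` with one end in `A` and the other in `B`. -/
def edgesBetween {V : Type} (G : SimpleGraph V) (A B : Set V) : Set (Sym2 V) :=
  {e | ∃ a ∈ A, ∃ b ∈ B, G.Adj a b ∧ e = s(a, b)}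
section Stmt18Aux

open SimpleGraph

def third (x y : Fin 3) : Fin 3 :=
  if x ≠ 0 ∧ y ≠ 0 then 0 else if x ≠ 1 ∧ y ≠ 1 then 1 else 2

lemma third_ne : ∀ x y : Fin 3, third x y ≠ x ∧ third x y ≠ y := by decide

lemma fin3_pigeon : ∀ x y z t : Fin 3, x ≠ y → z ≠ x → z ≠ y → (z = t ↔ (t ≠ x ∧ t ≠ y)) := by
  decide

lemma fin3_two_cases : ∀ m z : Fin 3, z ≠ m → z = third m m ∨ z = third m (third m m) := by decide

lemma third2_ne : ∀ m : Fin 3, third m (third m m) ≠ third m m := by decide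

lemma fin3_third_eq_two : ∀ x y : Fin 3, x ≠ y → x ≠ 2 → y ≠ 2 → third x y = 2 := by decide

lemma colorable_two_of_missing {W : Type} {G : SimpleGraph W} (d : G.Coloring (Fin 3)) (m : Fin 3)
    (hm : ∀ w, d w ≠ m) : G.Colorable 2 := by
  classical
  refine ⟨Coloring.mk (fun w => if d w = third m m then 0 else 1) ?_⟩
  intro u w h hc
  have hu := fin3_two_cases m (d u) (hm u)
  have hw := fin3_two_cases m (d w) (hm w)
  have hne := d.valid h
  have h3 := third2_ne m
  rcases hu with h1|h1 <;> rcases hw with h2|h2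
  · exact hne (h1.trans h2.symm)
  · rw [if_pos h1, if_neg (by rw [h2]; exact h3)] at hc
    exact absurd hc (by decide)
  · rw [if_neg (by rw [h1]; exact h3), if_pos h2] at hc
    exact absurd hc (by decide)
  · exact hne (h1.trans h2.symm)

lemma colorable_three {W : Type} {G : SimpleGraph W} (h : G.chromaticNumber = (3 : ℕ)) :
    G.Colorable 3 := by
  rw [← chromaticNumber_le_iff_colorable, h]

lemma not_colorable_two {W : Type} {G : SimpleGraph W} (h : G.chromaticNumber = (3 : ℕ)) :
    ¬ G.Colorable 2 := by
  intro hc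
  have h2 := hc.chromaticNumber_le
  rw [h] at h2
  norm_num at h2

lemma chrom_eq_three {W : Type} {G : SimpleGraph W} (h3 : G.Colorable 3) (h2 : ¬ G.Colorable 2) :
    G.chromaticNumber = (3 : ℕ) := by
  have hle := h3.chromaticNumber_le
  have hlt : (2 : ℕ∞) < G.chromaticNumber := by
    refine lt_of_not_ge fun hle2 => h2 (chromaticNumber_le_iff_colorable.mp ?_)
    exact_mod_cast hle2
  have h3le : ((3 : ℕ) : ℕ∞) ≤ G.chromaticNumber := by
    have h := Order.add_one_le_of_lt hlt
    refine le_trans (le_of_eq ?_) h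
    norm_num
  exact le_antisymm hle h3le

def restrCol {W : Type} {G : SimpleGraph W} (S : Set W) (d : G.Coloring (Fin 3)) :
    (G.induce S).Coloring (Fin 3) :=
  Coloring.mk (fun u => d u.1) (fun h => d.valid (by simpa using h))

lemma extColoring {W : Type} (G : SimpleGraph W) (v a b : W)
    (hva : G.Adj v a) (hvb : G.Adj v b)
    (hnbr : ∀ u, G.Adj v u → u = a ∨ u = b)
    (c : (G.induce {u : W | u ≠ v}).Coloring (Fin 3)) (y : Fin 3)
    (hya : y ≠ c ⟨a, hva.ne'⟩) (hyb : y ≠ c ⟨b, hvb.ne'⟩) :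
    ∃ d : G.Coloring (Fin 3), d v = y ∧ ∀ x : {u : W | u ≠ v}, d x.1 = c x := by
  classical
  refine ⟨Coloring.mk (fun u => if h : u = v then y else c ⟨u, h⟩) ?_, ?_, ?_⟩
  · intro u w hadj
    by_cases hu : u = v <;> by_cases hw : w = v
    · subst hu; subst hw; exact (hadj.ne rfl).elim
    · subst hu
      rw [dif_pos rfl, dif_neg hw]
      rcases hnbr w hadj with h|h
      · subst h; exact hya
      · subst h; exact hyb
    · subst hw
      rw [dif_neg hu, dif_pos rfl]
      rcases hnbr u hadj.symm with h|h
      · subst h; exact Ne.symm hya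
      · subst h; exact Ne.symm hyb
    · rw [dif_neg hu, dif_neg hw]
      exact c.valid (by simpa using hadj)
  · show (if h : v = v then y else c ⟨v, h⟩) = y
    rw [dif_pos rfl]
  · intro x
    show (if h : x.1 = v then y else c ⟨x.1, h⟩) = c x
    rw [dif_neg x.2]

end Stmt18Aux


/-- Deleting a degree-2 vertex from an edge-critical uniquely 3-colorable graph with
at least 4 vertices yields a uniquely 3-colorable, edge-critical graph. -/
theorem stmt_18 {V : Type} [Fintype V] (G : SimpleGraph V) (hG : EdgeCritical G 3)
    (v : V) (hdeg : {u : V | G.Adj v u}.ncard = 2) (hcard : 4 ≤ Fintype.card V) :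
    UniquelyKColorable (G.induce {u : V | u ≠ v}) 3 ∧
      EdgeCritical (G.induce {u : V | u ≠ v}) 3 := by
  classical
  obtain ⟨⟨hchi, huc⟩, hcrit⟩ := hG
  have hncol2 : ¬ G.Colorable 2 := not_colorable_two hchi
  obtain ⟨a, b, hab, hNab⟩ := Set.ncard_eq_two.mp hdeg
  have hva : G.Adj v a := by
    have h : a ∈ {u : V | G.Adj v u} := by rw [hNab]; exact Set.mem_insert _ _
    exact h
  have hvb : G.Adj v b := by
    have h : b ∈ {u : V | G.Adj v u} := by rw [hNab]; exact Set.mem_insert_of_mem _ rfl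
    exact h
  have hnbr : ∀ u, G.Adj v u → u = a ∨ u = b := by
    intro u h
    have h2 : u ∈ ({a, b} : Set V) := by rw [← hNab]; exact h
    simpa using h2
  have haS : a ≠ v := hva.ne'
  have hbS : b ≠ v := hvb.ne'
  -- Key fact: in every 3-coloring of G, a and b get different colors
  have key1 : ∀ d : G.Coloring (Fin 3), d a ≠ d b := by
    intro d hEq
    have hyv : third (d v) (d a) ≠ d v := (third_ne _ _).1
    have hyA : third (d v) (d a) ≠ d a := (third_ne _ _).2
    have hvalid : ∀ {p q : V}, G.Adj p q →
        (fun u => if u = v then third (d v) (d a) else d u) p ≠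
        (fun u => if u = v then third (d v) (d a) else d u) q := by
      intro p q hadj
      dsimp only
      by_cases hp : p = v <;> by_cases hq : q = v
      · subst hp; subst hq; exact (hadj.ne rfl).elim
      · subst hp
        rw [if_pos rfl, if_neg hq]
        rcases hnbr q hadj with h|h
        · subst h; exact hyA
        · subst h; rw [← hEq]; exact hyA
      · subst hq
        rw [if_neg hp, if_pos rfl]
        rcases hnbr p hadj.symm with h|h
        · subst h; exact Ne.symm hyA
        · subst h; rw [← hEq]; exact Ne.symm hyA
      · rw [if_neg hp, if_neg hq]; exact d.valid hadj
    have hmiss : ∀ w, d w ≠ third (d v) (d a) := by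
      intro w hw
      by_cases hwv : w = v
      · subst hwv; exact hyv hw.symm
      · have hiff := huc d (Coloring.mk _ hvalid) v w
        have hRHS : (Coloring.mk _ hvalid : G.Coloring (Fin 3)) v =
            Coloring.mk _ hvalid w := by
          show (if v = v then third (d v) (d a) else d v) =
            (if w = v then third (d v) (d a) else d w)
          rw [if_pos rfl, if_neg hwv, hw]
        have hLHS := hiff.mpr hRHS
        exact hyv (hLHS.trans hw).symm
    exact hncol2 (colorable_two_of_missing d _ hmiss)
  have hcol3 : G.Colorable 3 := colorable_three hchi
  obtain ⟨c⟩ := hcol3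
  -- every coloring of the induced graph extends to G
  have hextend : ∀ cc : (G.induce {u : V | u ≠ v}).Coloring (Fin 3),
      ∃ d : G.Coloring (Fin 3), ∀ x : {u : V | u ≠ v}, d x.1 = cc x := by
    intro cc
    by_cases h : cc ⟨a, haS⟩ = cc ⟨b, hbS⟩
    · obtain ⟨d, _, hd⟩ := extColoring G v a b hva hvb hnbr cc
        (third (cc ⟨a, haS⟩) (cc ⟨a, haS⟩)) (third_ne _ _).1 (by rw [← h]; exact (third_ne _ _).1)
      have hEq : d a = d b := by
        have h1 := hd ⟨a, haS⟩
        have h2 := hd ⟨b, hbS⟩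
        rw [h1, h2, h]
      exact (key1 d hEq).elim
    · obtain ⟨d, _, hd⟩ := extColoring G v a b hva hvb hnbr cc
        (third (cc ⟨a, haS⟩) (cc ⟨b, hbS⟩)) (third_ne _ _).1 (third_ne _ _).2
      exact ⟨d, hd⟩
  have keyH : ∀ cc : (G.induce {u : V | u ≠ v}).Coloring (Fin 3), cc ⟨a, haS⟩ ≠ cc ⟨b, hbS⟩ := by
    intro cc h
    obtain ⟨d, hd⟩ := hextend cc
    exact key1 d (by rw [hd ⟨a, haS⟩, hd ⟨b, hbS⟩, h])
  have hHcol3 : (G.induce {u : V | u ≠ v}).Colorable 3 := ⟨restrCol _ c⟩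
  -- the induced graph is not 2-colorable
  have hHncol2 : ¬ (G.induce {u : V | u ≠ v}).Colorable 2 := by
    rintro ⟨c₂⟩
    have hval : ∀ {x y : {u : V | u ≠ v}}, (G.induce {u : V | u ≠ v}).Adj x y →
        Fin.castLE (by norm_num) (c₂ x) ≠ Fin.castLE (by norm_num : 2 ≤ 3) (c₂ y) :=
      fun h hEq => c₂.valid h (Fin.castLE_injective _ hEq)
    have hr : ∀ u : {u : V | u ≠ v},
        (Coloring.mk _ hval : (G.induce {u : V | u ≠ v}).Coloring (Fin 3)) u ≠ 2 := by
      intro u hEq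
      have h3 : (Fin.castLE (by norm_num : 2 ≤ 3) (c₂ u)) = (2 : Fin 3) := hEq
      have h4 := congrArg Fin.val h3
      have h2 := (c₂ u).isLt
      simp [Fin.coe_castLE] at h4
      omega
    have hne := keyH (Coloring.mk _ hval)
    obtain ⟨d, hdv, hd⟩ := extColoring G v a b hva hvb hnbr (Coloring.mk _ hval)
      (third _ _) (third_ne _ _).1 (third_ne _ _).2
    have hv2 : d v = 2 := by
      rw [hdv]
      exact fin3_third_eq_two _ _ hne (hr _) (hr _)
    have hex : ∃ u₀ : V, u₀ ≠ v ∧ u₀ ≠ a ∧ u₀ ≠ b := by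
      by_contra hcon
      push_neg at hcon
      have hsub : (Finset.univ : Finset V) ⊆ {v, a, b} := by
        intro x _
        simp only [Finset.mem_insert, Finset.mem_singleton]
        by_cases h1 : x = v
        · exact Or.inl h1
        · by_cases h2 : x = a
          · exact Or.inr (Or.inl h2)
          · exact Or.inr (Or.inr (hcon x h1 h2))
      have hcards := Finset.card_le_card hsub
      rw [Finset.card_univ] at hcards
      have h3 : ({v, a, b} : Finset V).card ≤ 3 := by
        refine le_trans (Finset.card_insert_le _ _) ?_
        have := Finset.card_insert_le a ({b} : Finset V)
        simp at this ⊢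
        omega
      omega
    obtain ⟨u₀, hu0v, hu0a, hu0b⟩ := hex
    have hne2 : ∀ w, w ≠ v → d w ≠ 2 := by
      intro w hw hEq
      have h1 := hd ⟨w, hw⟩
      exact hr ⟨w, hw⟩ (h1 ▸ hEq)
    have hvalid2 : ∀ {p q : V}, G.Adj p q →
        (fun w => if w = u₀ then (2 : Fin 3) else d w) p ≠
        (fun w => if w = u₀ then (2 : Fin 3) else d w) q := by
      intro p q hadj
      dsimp only
      by_cases hp : p = u₀ <;> by_cases hq : q = u₀
      · subst hp; subst hq; exact (hadj.ne rfl).elim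
      · subst hp
        rw [if_pos rfl, if_neg hq]
        have hqv : q ≠ v := by
          rintro rfl
          rcases hnbr p hadj.symm with h|h
          · exact hu0a h
          · exact hu0b h
        exact Ne.symm (hne2 q hqv)
      · subst hq
        rw [if_neg hp, if_pos rfl]
        have hpv : p ≠ v := by
          rintro rfl
          rcases hnbr q hadj with h|h
          · exact hu0a h
          · exact hu0b h
        exact hne2 p hpv
      · rw [if_neg hp, if_neg hq]; exact d.valid hadj
    have hcontr := huc d (Coloring.mk _ hvalid2) v u₀
    have hRHS : (Coloring.mk _ hvalid2 : G.Coloring (Fin 3)) v = Coloring.mk _ hvalid2 u₀ := by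
      show (if v = u₀ then (2 : Fin 3) else d v) = (if u₀ = u₀ then (2 : Fin 3) else d u₀)
      rw [if_neg (Ne.symm hu0v), if_pos rfl, hv2]
    have hLHS := hcontr.mpr hRHS
    exact hne2 u₀ hu0v (hLHS.symm.trans hv2)
  have hHchi : (G.induce {u : V | u ≠ v}).chromaticNumber = (3 : ℕ) :=
    chrom_eq_three hHcol3 hHncol2
  have hHuc : ∀ c₁ c₂ : (G.induce {u : V | u ≠ v}).Coloring (Fin 3),
      ∀ x y : {u : V | u ≠ v}, c₁ x = c₁ y ↔ c₂ x = c₂ y := by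
    intro c₁ c₂ x y
    obtain ⟨d₁, hd₁⟩ := hextend c₁
    obtain ⟨d₂, hd₂⟩ := hextend c₂
    have h := huc d₁ d₂ x.1 y.1
    rwa [hd₁ x, hd₁ y, hd₂ x, hd₂ y] at h
  have hHuniq : UniquelyKColorable (G.induce {u : V | u ≠ v}) 3 := ⟨hHchi, hHuc⟩
  refine ⟨hHuniq, hHuniq, ?_⟩
  -- edge-criticality of the induced graph
  intro e''
  induction e'' using Sym2.ind with
  | _ p q =>
  intro he' hUd
  obtain ⟨hchiD, hucD⟩ := hUd
  have hpq : G.Adj p.1 q.1 := by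
    have h := (G.induce {u : V | u ≠ v}).mem_edgeSet.mp he'
    simpa using h
  have he : s(p.1, q.1) ∈ G.edgeSet := G.mem_edgeSet.mpr hpq
  have hKva : (G.deleteEdges {s(p.1, q.1)}).Adj v a := by
    rw [SimpleGraph.deleteEdges_adj]
    refine ⟨hva, ?_⟩
    simp only [Set.mem_singleton_iff]
    intro hEq
    rw [Sym2.eq_iff] at hEq
    rcases hEq with ⟨h1, _⟩|⟨h1, _⟩
    · exact p.2 h1.symm
    · exact q.2 h1.symm
  have hKvb : (G.deleteEdges {s(p.1, q.1)}).Adj v b := by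
    rw [SimpleGraph.deleteEdges_adj]
    refine ⟨hvb, ?_⟩
    simp only [Set.mem_singleton_iff]
    intro hEq
    rw [Sym2.eq_iff] at hEq
    rcases hEq with ⟨h1, _⟩|⟨h1, _⟩
    · exact p.2 h1.symm
    · exact q.2 h1.symm
  have hHdK : ∀ (x y : {u : V | u ≠ v}),
      ((G.induce {u : V | u ≠ v}).deleteEdges {s(p, q)}).Adj x y →
      (G.deleteEdges {s(p.1, q.1)}).Adj x.1 y.1 := by
    intro x y h
    rw [SimpleGraph.deleteEdges_adj] at h ⊢
    obtain ⟨hadj, hne⟩ := h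
    refine ⟨by simpa using hadj, ?_⟩
    simp only [Set.mem_singleton_iff] at hne ⊢
    intro hEq
    apply hne
    rw [Sym2.eq_iff] at hEq ⊢
    rcases hEq with ⟨h1, h2⟩|⟨h1, h2⟩
    · exact Or.inl ⟨Subtype.ext h1, Subtype.ext h2⟩
    · exact Or.inr ⟨Subtype.ext h1, Subtype.ext h2⟩
  -- restriction of K-colorings to the deleted induced graph
  have keyD : ∀ g : ((G.induce {u : V | u ≠ v}).deleteEdges {s(p, q)}).Coloring (Fin 3),
      g ⟨a, haS⟩ ≠ g ⟨b, hbS⟩ := by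
    intro g hEq
    have hcHd : ((restrCol {u : V | u ≠ v} c).comp
        (SimpleGraph.Hom.ofLE (SimpleGraph.deleteEdges_le _)) :
        ((G.induce {u : V | u ≠ v}).deleteEdges {s(p, q)}).Coloring (Fin 3)) ⟨a, haS⟩ =
        ((restrCol {u : V | u ≠ v} c).comp
        (SimpleGraph.Hom.ofLE (SimpleGraph.deleteEdges_le _))) ⟨b, hbS⟩ :=
      (hucD g _ ⟨a, haS⟩ ⟨b, hbS⟩).mp hEq
    exact key1 c hcHd
  have keyK : ∀ d : (G.deleteEdges {s(p.1, q.1)}).Coloring (Fin 3), d a ≠ d b := by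
    intro d hEq
    exact keyD (Coloring.mk (fun u => d u.1) (fun h => d.valid (hHdK _ _ h))) hEq
  have hKcol3 : (G.deleteEdges {s(p.1, q.1)}).Colorable 3 :=
    ⟨c.comp (SimpleGraph.Hom.ofLE (SimpleGraph.deleteEdges_le _))⟩
  have hKncol2 : ¬ (G.deleteEdges {s(p.1, q.1)}).Colorable 2 := by
    rintro ⟨d₂⟩
    apply not_colorable_two hchiD
    exact ⟨Coloring.mk (fun u => d₂ u.1) (fun h => d₂.valid (hHdK _ _ h))⟩
  have hKuc : ∀ d₁ d₂ : (G.deleteEdges {s(p.1, q.1)}).Coloring (Fin 3), ∀ x y : V,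
      d₁ x = d₁ y ↔ d₂ x = d₂ y := by
    intro d₁ d₂ x y
    have hS' : ∀ (x' y' : {u : V | u ≠ v}), (d₁ x'.1 = d₁ y'.1 ↔ d₂ x'.1 = d₂ y'.1) := by
      intro x' y'
      exact hucD (Coloring.mk (fun u => d₁ u.1) (fun h => d₁.valid (hHdK _ _ h)))
        (Coloring.mk (fun u => d₂ u.1) (fun h => d₂.valid (hHdK _ _ h))) x' y'
    have hvp : ∀ (d : (G.deleteEdges {s(p.1, q.1)}).Coloring (Fin 3)) (w : V),
        (d v = d w ↔ (d w ≠ d a ∧ d w ≠ d b)) := by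
      intro d w
      exact fin3_pigeon (d a) (d b) (d v) (d w) (keyK d) (d.valid hKva) (d.valid hKvb)
    have hvcase : ∀ w, w ≠ v → (d₁ v = d₁ w ↔ d₂ v = d₂ w) := by
      intro w hw
      rw [hvp d₁ w, hvp d₂ w]
      have hA := hS' ⟨w, hw⟩ ⟨a, haS⟩
      have hB := hS' ⟨w, hw⟩ ⟨b, hbS⟩
      constructor
      · rintro ⟨h1, h2⟩
        exact ⟨fun hEq => h1 (hA.mpr hEq), fun hEq => h2 (hB.mpr hEq)⟩
      · rintro ⟨h1, h2⟩
        exact ⟨fun hEq => h1 (hA.mp hEq), fun hEq => h2 (hB.mp hEq)⟩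
    by_cases hx : x = v <;> by_cases hy : y = v
    · subst hx; subst hy; simp
    · subst hx; exact hvcase y hy
    · subst hy
      exact ⟨fun h => ((hvcase x hx).mp h.symm).symm, fun h => ((hvcase x hx).mpr h.symm).symm⟩
    · exact hS' ⟨x, hx⟩ ⟨y, hy⟩
  exact hcrit s(p.1, q.1) he ⟨chrom_eq_three hKcol3 hKncol2, hKuc⟩
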